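/- Let α < 0, R̄ < 0, and M₀ > 0 be real numbers with M₀ + R̄ < 0, and set c₁ := (R̄ + M₀)/M₀. Then for all t ≥ 0, R̄/(−1 + c₁·e^{αR̄t}) ≤ (R̄·M₀/(R̄ + M₀))·e^{−αR̄t}. -/
import Mathlib


/-- Exponential upper bound for the explicit solution of the comparison ODE:
for `α < 0`, `R̄ < 0`, `M₀ > 0` with `M₀ + R̄ < 0` and `c₁ = (R̄ + M₀)/M₀`,
one has `R̄/(-1 + c₁ e^{αR̄t}) ≤ (R̄M₀/(R̄ + M₀)) e^{-αR̄t}` for all `t ≥ 0`. -/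
theorem stmt_12 (α Rbar M₀ : ℝ) (hα : α < 0) (hR : Rbar < 0) (hM : 0 < M₀)
    (hMR : M₀ + Rbar < 0) (c₁ : ℝ) (hc₁ : c₁ = (Rbar + M₀) / M₀) :
    ∀ t : ℝ, 0 ≤ t →
      Rbar / (-1 + c₁ * Real.exp (α * Rbar * t)) ≤
        (Rbar * M₀ / (Rbar + M₀)) * Real.exp (-(α * Rbar * t)) := by
  intro t ht
  have hu1 : 1 ≤ Real.exp (α * Rbar * t) := Real.one_le_exp (mul_nonneg (mul_pos_of_neg_of_neg hα hR).le ht)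
  set u := Real.exp (α * Rbar * t) with hu
  have hupos : 0 < u := Real.exp_pos _
  have hRM : Rbar + M₀ < 0 := by linarith
  have hc : c₁ < 0 := by
    rw [hc₁]; exact div_neg_of_neg_of_pos hRM hM
  have hden : -1 + c₁ * u < 0 := by nlinarith
  rw [Real.exp_neg, ← hu, div_le_iff_of_neg hden, hc₁]
  have h1 : Rbar * M₀ / (Rbar + M₀) * u⁻¹ * (-1 + (Rbar + M₀) / M₀ * u)
      = Rbar - Rbar * M₀ / (Rbar + M₀) * u⁻¹ := by
    field_simp [hupos.ne', hRM.ne, hM.ne']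
    ring
  rw [h1]
  have h2 : 0 < Rbar * M₀ / (Rbar + M₀) * u⁻¹ := by
    apply mul_pos _ (inv_pos.mpr hupos)
    exact div_pos_of_neg_of_neg (by nlinarith) hRM
  linarith
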